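/- Let g(λ) = E[1(λ r^C < r^D)(r^D − λ r^C)] + λ E[r^C] − λ r_th be the Lagrange dual function. If λ* = min{λ ≥ 0 : E[r^C 1(λ r^C ≥ r^D)] ≥ r_th}, then for all Δλ > 0: g(λ* + Δλ) ≥ g(λ*), i.e., g is nondecreasing to the right of λ*. -/
import Mathlib


open MeasureTheory Set

/-- The Lagrange dual function `g(λ) = E[1(λ r^C < r^D)(r^D − λ r^C)] + λ E[r^C] − λ r_th`. -/
noncomputable def dualFn {S : Type*} [MeasurableSpace S] (μ : Measure S)
    (rC rD : S → ℝ) (rth : ℝ) (l : ℝ) : ℝ :=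
  (∫ s, ({s | l * rC s < rD s}.indicator (fun s => rD s - l * rC s)) s ∂μ) +
    l * (∫ s, rC s ∂μ) - l * rth

/-- `g` is nondecreasing to the right of `λ*`. -/
theorem stmt11 {S : Type*} [MeasurableSpace S] (μ : Measure S) [IsProbabilityMeasure μ]
    (rC rD : S → ℝ) (hC : ∀ s, 0 ≤ rC s) (hD : ∀ s, 0 ≤ rD s)
    (hCi : Integrable rC μ) (hDi : Integrable rD μ)
    (rth : ℝ) (hrth : 0 < rth) (lstar : ℝ) (hl0 : 0 ≤ lstar)
    (hmem : rth ≤ ∫ s, ({s | rD s ≤ lstar * rC s}.indicator rC) s ∂μ)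
    (hmin : ∀ l : ℝ, 0 ≤ l →
      rth ≤ ∫ s, ({s | rD s ≤ l * rC s}.indicator rC) s ∂μ → lstar ≤ l) :
    ∀ Δ : ℝ, 0 < Δ → dualFn μ rC rD rth lstar ≤ dualFn μ rC rD rth (lstar + Δ) := by
  intro Δ hΔ
  set ind : S → ℝ := fun s => ({s | rD s ≤ lstar * rC s}.indicator rC) s with hind_def
  by_cases hind : Integrable ind μ
  · have keyeq : ∀ (l : ℝ),
        (fun s => ({s | l * rC s < rD s}.indicator (fun s => rD s - l * rC s)) s)
          = fun s => max (rD s - l * rC s) 0 := by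
      intro l; funext s
      by_cases h : l * rC s < rD s
      · simp only [Set.indicator_apply, Set.mem_setOf_eq, if_pos h]
        rw [max_eq_left (by linarith)]
      · simp only [Set.indicator_apply, Set.mem_setOf_eq, if_neg h]
        rw [max_eq_right (by push_neg at h; linarith)]
    have hfint : ∀ l : ℝ, Integrable (fun s => max (rD s - l * rC s) 0) μ := by
      intro l
      have := (hDi.sub (hCi.const_mul l)).pos_part
      simpa using this
    have hI : ∫ s, ind s ∂μ ≤ ∫ s, rC s ∂μ := by
      refine integral_mono hind hCi fun s => ?_
      exact Set.indicator_le_self' (fun x _ => hC x) s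
    have hpt : ∀ s, max (rD s - lstar * rC s) 0
        ≤ max (rD s - (lstar + Δ) * rC s) 0 + Δ * (rC s - ind s) := by
      intro s
      by_cases h : rD s ≤ lstar * rC s
      · have : ind s = rC s := by
          simp only [hind_def, Set.indicator_apply, Set.mem_setOf_eq, if_pos h]
        rw [this, max_eq_right (by linarith)]
        have : (0:ℝ) ≤ max (rD s - (lstar + Δ) * rC s) 0 := le_max_right _ _
        linarith
      · have : ind s = 0 := by
          simp only [hind_def, Set.indicator_apply, Set.mem_setOf_eq, if_neg h]
        push_neg at h
        rw [this, max_eq_left (by linarith)]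
        have h2 : rD s - (lstar + Δ) * rC s ≤ max (rD s - (lstar + Δ) * rC s) 0 :=
          le_max_left _ _
        have h3 : 0 ≤ rC s := hC s
        nlinarith
    have g2 : Integrable (fun s => Δ * (rC s - ind s)) μ := by
      simpa using (hCi.sub hind).const_mul Δ
    have hint2 : Integrable (fun s => max (rD s - (lstar + Δ) * rC s) 0
        + Δ * (rC s - ind s)) μ :=
      (hfint (lstar + Δ)).add g2
    have h1 : ∫ s, max (rD s - lstar * rC s) 0 ∂μ
        ≤ ∫ s, (max (rD s - (lstar + Δ) * rC s) 0 + Δ * (rC s - ind s)) ∂μ :=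
      integral_mono (hfint lstar) hint2 hpt
    rw [integral_add (hfint (lstar + Δ)) g2,
        MeasureTheory.integral_const_mul, integral_sub hCi hind] at h1
    simp only [dualFn, keyeq]
    nlinarith [mul_le_mul_of_nonneg_left hmem hΔ.le]
  · rw [integral_undef hind] at hmem
    linarith
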